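/- arXiv:2510.18167 — 3 statements merged into one kernel-verified Lean document; each statement's English description precedes it below -/
import Mathlib

section
/- Let g_x = 2^{-N/2}(g_∅ + ∑_{A ⊆ [N], A≠∅} (1 + (α/(1-α))(1-ρ_A))^{-1/2} ∏_{j∈A}(-1)^{x[j]} g_A) where (g_A)_{A⊆[N]} are i.i.d. standard normal. Then (g_x)_{x ∈ {0,1}^N} is a centered Gaussian field with Cov(g_x, g_y) = 2^{-N}(1 + ∑_{A≠∅} (1 + (α/(1-α))(1-ρ_A))^{-1} ∏_{k∈A}(-1)^{x[k]+y[k]}) = (1-α)G(x,y;α). -/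
open Finset MeasureTheory ProbabilityTheory
open scoped ENNReal NNReal

section GaussAux

lemma gauss01_eq : gaussianReal 0 1 =
    (volume : Measure ℝ).withDensity
      (fun x => (((gaussianPDFReal 0 1 x).toNNReal : ℝ≥0) : ℝ≥0∞)) := by
  rw [gaussianReal_of_var_ne_zero 0 one_ne_zero]
  rfl

lemma gauss01_integral (f : ℝ → ℝ) :
    ∫ x, f x ∂(gaussianReal 0 1) = ∫ x, gaussianPDFReal 0 1 x * f x := by
  rw [gauss01_eq, integral_withDensity_eq_integral_smul
    ((measurable_gaussianPDFReal 0 1).real_toNNReal) f]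
  congr 1
  ext x
  simp [NNReal.smul_def, Real.coe_toNNReal _ (gaussianPDFReal_nonneg 0 1 x)]

lemma gauss01_integrable (f : ℝ → ℝ)
    (h : Integrable (fun x => gaussianPDFReal 0 1 x * f x)) :
    Integrable f (gaussianReal 0 1) := by
  rw [gauss01_eq, integrable_withDensity_iff_integrable_smul
    ((measurable_gaussianPDFReal 0 1).real_toNNReal)]
  apply h.congr
  filter_upwards with x
  simp [NNReal.smul_def, Real.coe_toNNReal _ (gaussianPDFReal_nonneg 0 1 x)]

lemma gaussianPDFReal_01 (x : ℝ) :
    gaussianPDFReal 0 1 x = (Real.sqrt (2 * Real.pi))⁻¹ * Real.exp (-(2:ℝ)⁻¹ * x ^ 2) := by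
  rw [gaussianPDFReal]
  push_cast
  rw [mul_one, sub_zero]
  congr 1
  ring_nf

lemma integrable_pdf_mul_id : Integrable (fun x : ℝ => gaussianPDFReal 0 1 x * x) := by
  have h := (integrable_mul_exp_neg_mul_sq (b := (2:ℝ)⁻¹) (by norm_num)).const_mul
    ((Real.sqrt (2 * Real.pi))⁻¹)
  refine h.congr ?_
  filter_upwards with x
  rw [gaussianPDFReal_01]
  ring

lemma integrable_pdf_mul_sq : Integrable (fun x : ℝ => gaussianPDFReal 0 1 x * x ^ 2) := by
  have h := (integrable_rpow_mul_exp_neg_mul_sq (b := (2:ℝ)⁻¹) (by norm_num)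
    (s := 2) (by norm_num)).const_mul ((Real.sqrt (2 * Real.pi))⁻¹)
  refine h.congr ?_
  filter_upwards with x
  rw [gaussianPDFReal_01, show ((2:ℝ)) = ((2:ℕ):ℝ) by norm_num, Real.rpow_natCast]
  ring

lemma integral_id_gauss01 : ∫ x, x ∂(gaussianReal 0 1) = 0 := by
  rw [gauss01_integral (fun x => x)]
  have h := integral_neg_eq_self (fun x => gaussianPDFReal 0 1 x * x) (volume : Measure ℝ)
  have heq : ∀ x : ℝ, gaussianPDFReal 0 1 (-x) * (-x) = -(gaussianPDFReal 0 1 x * x) := by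
    intro x
    rw [gaussianPDFReal_01, gaussianPDFReal_01, neg_sq]
    ring
  simp_rw [heq, integral_neg] at h
  linarith

lemma integral_sq_exp :
    ∫ x : ℝ, x ^ 2 * Real.exp (-(2:ℝ)⁻¹ * x ^ 2) = Real.sqrt (2 * Real.pi) := by
  have habs := integral_comp_abs (f := fun x : ℝ => x ^ 2 * Real.exp (-(2:ℝ)⁻¹ * x ^ 2))
  simp_rw [sq_abs] at habs
  rw [habs]
  have hIoi : ∫ x in Set.Ioi (0:ℝ), x ^ 2 * Real.exp (-(2:ℝ)⁻¹ * x ^ 2)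
      = ((2:ℝ)⁻¹) ^ (-(2+1:ℝ)/2) * (1/2) * Real.Gamma ((2+1)/2) := by
    rw [← integral_rpow_mul_exp_neg_mul_rpow (p := 2) (q := 2) (b := (2:ℝ)⁻¹)
      (by norm_num) (by norm_num) (by norm_num)]
    refine setIntegral_congr_fun measurableSet_Ioi (fun x hx => ?_)
    rw [show ((2:ℝ)) = ((2:ℕ):ℝ) by norm_num, Real.rpow_natCast]
  rw [hIoi]
  have hG : Real.Gamma ((2+1)/2) = (1/2) * Real.sqrt Real.pi := by
    rw [show ((2:ℝ)+1)/2 = 1/2 + 1 by norm_num, Real.Gamma_add_one (by norm_num),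
      Real.Gamma_one_half_eq]
  have hp : ((2:ℝ)⁻¹) ^ (-(2+1:ℝ)/2) = 2 * Real.sqrt 2 := by
    rw [Real.inv_rpow (by norm_num), ← Real.rpow_neg (by norm_num),
      show -(-(2+1:ℝ)/2) = 1 + 1/2 by norm_num, Real.rpow_add (by norm_num),
      Real.rpow_one, ← Real.sqrt_eq_rpow]
  rw [hG, hp, Real.sqrt_mul (by norm_num)]
  ring

lemma integral_sq_gauss01 : ∫ x, x ^ 2 ∂(gaussianReal 0 1) = 1 := by
  rw [gauss01_integral (fun x => x ^ 2)]
  have : ∀ x : ℝ, gaussianPDFReal 0 1 x * x ^ 2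
      = (Real.sqrt (2 * Real.pi))⁻¹ * (x ^ 2 * Real.exp (-(2:ℝ)⁻¹ * x ^ 2)) := by
    intro x; rw [gaussianPDFReal_01]; ring
  simp_rw [this]
  rw [integral_const_mul, integral_sq_exp, inv_mul_cancel₀]
  positivity

lemma memℒp_two_gauss01 : MemLp (id : ℝ → ℝ) 2 (gaussianReal 0 1) := by
  rw [memLp_two_iff_integrable_sq aestronglyMeasurable_id]
  apply gauss01_integrable
  exact integrable_pdf_mul_sq

end GaussAux

/-- the field
`g_x = 2^{-N/2}(g_∅ + ∑_{A≠∅} (1+(α/(1-α))(1-ρ_A))^{-1/2} ∏_{j∈A}(-1)^{x[j]} g_A)`,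
with `(g_A)` i.i.d. standard normals, is centered with covariance
`Cov(g_x,g_y) = 2^{-N}(1 + ∑_{A≠∅}(1+(α/(1-α))(1-ρ_A))⁻¹ ∏_{k∈A}(-1)^{x[k]+y[k]})
= (1-α)G(x,y;α)`. -/
theorem gaussian_field_strong_representation
    (N : ℕ) (hN : 0 < N) (α : ℝ) (hα : α ∈ Set.Ioo (0 : ℝ) 1)
    (ρ : Finset (Fin N) → ℝ)
    (hρ : ∀ A, ρ A ∈ Set.Icc (-1 : ℝ) 1) (hρ0 : ρ ∅ = 1)
    {Ω : Type*} [MeasurableSpace Ω] (μ : Measure Ω) [IsProbabilityMeasure μ]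
    (g : Finset (Fin N) → Ω → ℝ)
    (hgmeas : ∀ A, Measurable (g A))
    (hglaw : ∀ A, Measure.map (g A) μ = gaussianReal 0 1)
    (hgindep : iIndepFun g μ)
    (gx : (Fin N → ZMod 2) → Ω → ℝ)
    (hgx : ∀ x ω, gx x ω = (Real.sqrt ((2 : ℝ) ^ N))⁻¹ *
      (g ∅ ω + ∑ A ∈ (Finset.univ : Finset (Finset (Fin N))).filter (· ≠ ∅),
        (Real.sqrt (1 + (α / (1 - α)) * (1 - ρ A)))⁻¹ *
          (∏ j ∈ A, (-1 : ℝ) ^ ((x j).val)) * g A ω)) :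
    (∀ x, ∫ ω, gx x ω ∂μ = 0) ∧
      (∀ x y, ∫ ω, gx x ω * gx y ω ∂μ
        = (2 : ℝ) ^ (-(N : ℤ)) *
          (1 + ∑ A ∈ (Finset.univ : Finset (Finset (Fin N))).filter (· ≠ ∅),
            (1 + (α / (1 - α)) * (1 - ρ A))⁻¹ *
              ∏ k ∈ A, (-1 : ℝ) ^ ((x k).val + (y k).val))) := by
  obtain ⟨hα0, hα1⟩ := hα
  set s : ℝ := (Real.sqrt ((2 : ℝ) ^ N))⁻¹ with hs
  set t : Finset (Fin N) → ℝ := fun A => 1 + (α / (1 - α)) * (1 - ρ A) with hT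
  have htpos : ∀ A, 0 < t A := by
    intro A
    have h1 : 0 ≤ α / (1 - α) := div_nonneg hα0.le (by linarith)
    have h2 : 0 ≤ 1 - ρ A := by have := (hρ A).2; linarith
    have := mul_nonneg h1 h2
    simp only [hT]
    linarith
  set c : (Fin N → ZMod 2) → Finset (Fin N) → ℝ := fun x A =>
    if A = ∅ then 1 else (Real.sqrt (t A))⁻¹ * ∏ j ∈ A, (-1 : ℝ) ^ ((x j).val) with hc
  -- rewrite gx as a sum over all subsets
  have hgx' : ∀ x ω, gx x ω = s * ∑ A : Finset (Fin N), c x A * g A ω := by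
    intro x ω
    rw [hgx]
    congr 1
    rw [← Finset.add_sum_erase _ (fun A => c x A * g A ω) (Finset.mem_univ ∅)]
    have h0 : c x ∅ = 1 := by simp [hc]
    rw [h0, one_mul, ← Finset.filter_ne']
    congr 1
    refine Finset.sum_congr rfl (fun A hA => ?_)
    have hAne : A ≠ ∅ := (Finset.mem_filter.mp hA).2
    simp only [hc, if_neg hAne, hT]
  -- basic facts about the g A
  have hg2 : ∀ A, MemLp (g A) 2 μ := by
    intro A
    have h := memℒp_two_gauss01
    rw [← hglaw A] at h
    exact (memLp_map_measure_iff aestronglyMeasurable_id (hgmeas A).aemeasurable).mp h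
  have hgint : ∀ A, Integrable (g A) μ := fun A => (hg2 A).integrable one_le_two
  have hgmean : ∀ A, ∫ ω, g A ω ∂μ = 0 := by
    intro A
    have h := integral_map (μ := μ) (hgmeas A).aemeasurable
      (f := fun u : ℝ => u) aestronglyMeasurable_id
    rw [hglaw A, integral_id_gauss01] at h
    exact h.symm
  have hmulint : ∀ A B, Integrable (fun ω => g A ω * g B ω) μ := by
    intro A B
    rcases eq_or_ne A B with rfl | hAB
    · exact ((hg2 A).integrable_sq).congr (by filter_upwards with ω; rw [sq])
    · exact ((hgindep.indepFun hAB).integrable_mul (hgint A) (hgint B))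
  have hmul : ∀ A B, ∫ ω, g A ω * g B ω ∂μ = if A = B then 1 else 0 := by
    intro A B
    rcases eq_or_ne A B with rfl | hAB
    · rw [if_pos rfl]
      have h := integral_map (μ := μ) (hgmeas A).aemeasurable
        (f := fun u : ℝ => u ^ 2) (by fun_prop)
      rw [hglaw A, integral_sq_gauss01] at h
      refine Eq.trans ?_ h.symm
      congr 1
      funext ω
      simp [sq]
    · rw [if_neg hAB]
      have h := (hgindep.indepFun hAB).integral_mul_eq_mul_integral (hgint A).aestronglyMeasurable
        (hgint B).aestronglyMeasurable
      rw [hgmean A, hgmean B, mul_zero] at h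
      exact h
  constructor
  · -- mean zero
    intro x
    simp_rw [hgx' x]
    rw [integral_const_mul, integral_finset_sum _ (fun A _ => (hgint A).const_mul _)]
    simp_rw [integral_const_mul]
    simp [hgmean]
  · -- covariance
    intro x y
    have key : ∀ ω, gx x ω * gx y ω
        = s ^ 2 * ∑ A : Finset (Fin N), ∑ B : Finset (Fin N),
            (c x A * c y B) * (g A ω * g B ω) := by
      intro ω
      rw [hgx' x, hgx' y, mul_mul_mul_comm, ← sq, Finset.sum_mul_sum]
      congr 1
      refine Finset.sum_congr rfl fun A _ => Finset.sum_congr rfl fun B _ => ?_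
      ring
    simp_rw [key]
    rw [integral_const_mul,
      integral_finset_sum _ (fun A _ => integrable_finset_sum _
        (fun B _ => (hmulint A B).const_mul _))]
    have hinner : ∀ A, ∫ ω, ∑ B : Finset (Fin N), (c x A * c y B) * (g A ω * g B ω) ∂μ
        = c x A * c y A := by
      intro A
      rw [integral_finset_sum _ (fun B _ => (hmulint A B).const_mul _)]
      simp_rw [integral_const_mul, hmul]
      simp
    simp_rw [hinner]
    -- now compute the sum of products of coefficients
    have hsum : ∑ A : Finset (Fin N), c x A * c y A
        = 1 + ∑ A ∈ (Finset.univ : Finset (Finset (Fin N))).filter (· ≠ ∅),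
            (1 + (α / (1 - α)) * (1 - ρ A))⁻¹ *
              ∏ k ∈ A, (-1 : ℝ) ^ ((x k).val + (y k).val) := by
      rw [← Finset.add_sum_erase _ (fun A => c x A * c y A) (Finset.mem_univ ∅)]
      have h0 : c x ∅ * c y ∅ = 1 := by simp [hc]
      rw [h0, ← Finset.filter_ne']
      congr 1
      refine Finset.sum_congr rfl fun A hA => ?_
      have hAne : A ≠ ∅ := (Finset.mem_filter.mp hA).2
      simp only [hc, if_neg hAne]
      have hsqrt : (Real.sqrt (t A))⁻¹ * (Real.sqrt (t A))⁻¹ = (t A)⁻¹ := by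
        rw [← mul_inv, Real.mul_self_sqrt (htpos A).le]
      have hprod : (∏ j ∈ A, (-1 : ℝ) ^ ((x j).val)) * ∏ j ∈ A, (-1 : ℝ) ^ ((y j).val)
          = ∏ k ∈ A, (-1 : ℝ) ^ ((x k).val + (y k).val) := by
        rw [← Finset.prod_mul_distrib]
        exact Finset.prod_congr rfl fun k _ => (pow_add _ _ _).symm
      calc (Real.sqrt (t A))⁻¹ * (∏ j ∈ A, (-1 : ℝ) ^ ((x j).val)) *
            ((Real.sqrt (t A))⁻¹ * ∏ j ∈ A, (-1 : ℝ) ^ ((y j).val))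
          = ((Real.sqrt (t A))⁻¹ * (Real.sqrt (t A))⁻¹) *
            ((∏ j ∈ A, (-1 : ℝ) ^ ((x j).val)) * ∏ j ∈ A, (-1 : ℝ) ^ ((y j).val)) := by ring
        _ = (t A)⁻¹ * ∏ k ∈ A, (-1 : ℝ) ^ ((x k).val + (y k).val) := by
            rw [hsqrt, hprod]
    rw [hsum]
    congr 1
    -- s ^ 2 = 2 ^ (-N)
    rw [hs, inv_pow, Real.sq_sqrt (by positivity), zpow_neg, zpow_natCast]
end

section
/- With Y = ∏_{j=1}^{T_α} ξ_j as above and V = (1−Y)/2, for any x, y ∈ {0,1}^N (entries of the de Finetti random walk) the killed Green function satisfies (1-α)G(x,y;α) = E[((1−Y)/2)^{‖y−x‖} ((1+Y)/2)^{N−‖y−x‖}]; equivalently, X_{T_α} − x mod 2 is an exchangeable 0-1 sequence (de Finetti) with mixing measure equal to the law of V. -/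
open Finset MeasureTheory ProbabilityTheory

private lemma measurable_nat_comp {Ω : Type*} [MeasurableSpace Ω] {T : Ω → ℕ}
    (hT : Measurable T) {g : ℕ → Ω → ℝ} (hg : ∀ t, Measurable (g t)) :
    Measurable fun ω => g (T ω) ω := by
  intro s hs
  have h : (fun ω => g (T ω) ω) ⁻¹' s = ⋃ t, ({ω | T ω = t} ∩ g t ⁻¹' s) := by
    ext ω
    simp only [Set.mem_preimage, Set.mem_iUnion, Set.mem_inter_iff, Set.mem_setOf_eq]
    constructor
    · intro h; exact ⟨T ω, rfl, h⟩
    · rintro ⟨t, ht, h⟩; rwa [ht]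
  rw [h]
  exact MeasurableSet.iUnion fun t => (hT (measurableSet_singleton t)).inter (hg t hs)

private lemma integral_prod_range {Ω : Type*} [MeasurableSpace Ω] (μ : Measure Ω)
    [IsProbabilityMeasure μ] (f : ℕ → Ω → ℝ)
    (hmeas : ∀ i, Measurable (f i))
    (hindep : iIndepFun f μ) (t : ℕ) :
    ∫ ω, ∏ j ∈ Finset.range t, f j ω ∂μ = ∏ j ∈ Finset.range t, ∫ ω, f j ω ∂μ := by
  induction t with
  | zero => simp
  | succ n ih =>
    have h1 : IndepFun (∏ j ∈ Finset.range n, f j) (f n) μ :=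
      hindep.indepFun_prod_range_succ hmeas n
    have hprodmeas : Measurable (∏ j ∈ Finset.range n, f j) := by
      have : (∏ j ∈ Finset.range n, f j) = fun ω => ∏ j ∈ Finset.range n, f j ω := by
        funext ω; simp [Finset.prod_apply]
      rw [this]
      exact Finset.measurable_prod _ fun j _ => hmeas j
    have h2 := h1.integral_mul_eq_mul_integral hprodmeas.aestronglyMeasurable (hmeas n).aestronglyMeasurable
    calc ∫ ω, ∏ j ∈ Finset.range (n + 1), f j ω ∂μ
        = ∫ ω, ((∏ j ∈ Finset.range n, f j) * f n) ω ∂μ := by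
          congr 1; funext ω
          simp [Finset.prod_apply, Finset.prod_range_succ]
      _ = (∫ ω, (∏ j ∈ Finset.range n, f j) ω ∂μ) * ∫ ω, f n ω ∂μ := h2
      _ = (∫ ω, ∏ j ∈ Finset.range n, f j ω ∂μ) * ∫ ω, f n ω ∂μ := by
          congr 1; simp [Finset.prod_apply]
      _ = ∏ j ∈ Finset.range (n + 1), ∫ ω, f j ω ∂μ := by
          rw [ih, Finset.prod_range_succ]

/-- for the de Finetti random walk (increment mixing measure `ν` on `[0,1]`,
spin law `μ_ξ = law of 1-2ω`), with `Y = ∏_{j=1}^{T_α} ξ_j`, the killed Green function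
satisfies `(1-α)G(x,y;α) = E[((1-Y)/2)^{‖y-x‖}((1+Y)/2)^{N-‖y-x‖}]`; equivalently,
`X_{T_α} - x mod 2` is a de Finetti sequence with mixing measure the law of
`V = (1-Y)/2`. -/
theorem deFinetti_green_function_Y
    (N : ℕ) (hN : 0 < N) (α : ℝ) (hα : α ∈ Set.Ioo (0 : ℝ) 1)
    (ν : Measure ℝ) [IsProbabilityMeasure ν]
    (hν : ν (Set.Icc (0 : ℝ) 1)ᶜ = 0)
    {Ω : Type*} [MeasurableSpace Ω] (μ : Measure Ω) [IsProbabilityMeasure μ]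
    (ξ : ℕ → Ω → ℝ) (T : Ω → ℕ)
    (hξmeas : ∀ j, Measurable (ξ j))
    (hξlaw : ∀ j, Measure.map (ξ j) μ = Measure.map (fun w : ℝ => 1 - 2 * w) ν)
    (hξindep : iIndepFun ξ μ)
    (hTmeas : Measurable T)
    (hTgeom : ∀ t : ℕ, μ {ω | T ω = t} = ENNReal.ofReal ((1 - α) * α ^ t))
    (hTindep : IndepFun T (fun ω => fun j => ξ j ω) μ)
    (Y : Ω → ℝ)
    (hY : ∀ ω, Y ω = ∏ j ∈ Finset.range (T ω), ξ j ω)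
    (ρ : ℕ → ℝ) (hρ : ∀ k, ρ k = ∫ w, (1 - 2 * w) ^ k ∂ν)
    (Q : ℕ → ℕ → ℝ)
    (hQ : ∀ w : ℕ, w ≤ N → ∀ φ : ℝ,
      ∑ k ∈ Finset.range (N + 1), (N.choose k : ℝ) * Q k w * φ ^ k
        = (1 - φ) ^ w * (1 + φ) ^ (N - w)) :
    ∀ x y : Fin N → ZMod 2,
      (2 : ℝ) ^ (-(N : ℤ)) *
        (1 + ∑ k ∈ Finset.Icc 1 N,
          (1 + (α / (1 - α)) * (1 - ρ k))⁻¹ * (N.choose k : ℝ) *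
            Q k (∑ j, ((y - x) j).val))
      = ∫ ω, ((1 - Y ω) / 2) ^ (∑ j, ((y - x) j).val) *
          ((1 + Y ω) / 2) ^ (N - ∑ j, ((y - x) j).val) ∂μ := by
  obtain ⟨hα0, hα1⟩ := hα
  intro x y
  set w : ℕ := ∑ j, ((y - x) j).val with hwdef
  have hw : w ≤ N := by
    calc w ≤ ∑ _j : Fin N, 1 := by
          refine Finset.sum_le_sum fun j _ => ?_
          exact Nat.lt_succ_iff.mp (ZMod.val_lt _)
      _ = N := by simp
  -- measurability of Y
  have hYm : Measurable Y := by
    have hYe : Y = fun ω => (fun t ω' => ∏ j ∈ Finset.range t, ξ j ω') (T ω) ω :=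
      funext fun ω => hY ω
    rw [hYe]
    exact measurable_nat_comp hTmeas fun t => Finset.measurable_prod _ fun j _ => hξmeas j
  -- a.s. bounds
  have hξbd : ∀ j, ∀ᵐ ω ∂μ, |ξ j ω| ≤ 1 := by
    intro j
    rw [ae_iff]
    have hset : MeasurableSet {x : ℝ | 1 < |x|} := measurable_abs measurableSet_Ioi
    have he : {ω | ¬|ξ j ω| ≤ 1} = ξ j ⁻¹' {x : ℝ | 1 < |x|} := by
      ext ω; simp [not_le]
    rw [he, ← Measure.map_apply (hξmeas j) hset, hξlaw j,
      Measure.map_apply (by fun_prop) hset]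
    refine measure_mono_null ?_ hν
    intro u hu
    simp only [Set.mem_preimage, Set.mem_setOf_eq] at hu
    simp only [Set.mem_compl_iff, Set.mem_Icc, not_and_or, not_le]
    by_contra hcon
    push_neg at hcon
    have : |1 - 2 * u| ≤ 1 := abs_le.mpr ⟨by linarith [hcon.2], by linarith [hcon.1]⟩
    linarith
  have hξbd' : ∀ᵐ ω ∂μ, ∀ j, |ξ j ω| ≤ 1 := ae_all_iff.mpr hξbd
  have hYbd : ∀ᵐ ω ∂μ, |Y ω| ≤ 1 := by
    filter_upwards [hξbd'] with ω hω
    rw [hY ω, Finset.abs_prod]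
    exact Finset.prod_le_one (fun j _ => abs_nonneg _) fun j _ => hω j
  have hYk_int : ∀ k : ℕ, Integrable (fun ω => Y ω ^ k) μ := by
    intro k
    refine (integrable_const (1 : ℝ)).mono' (hYm.pow_const k).aestronglyMeasurable ?_
    filter_upwards [hYbd] with ω h
    rw [Real.norm_eq_abs, abs_pow]
    exact pow_le_one₀ (abs_nonneg _) h
  -- facts about ρ
  have hmem : ∀ᵐ u ∂ν, u ∈ Set.Icc (0 : ℝ) 1 := by
    rw [ae_iff]
    exact hν
  have habs : ∀ᵐ u ∂ν, |1 - 2 * u| ≤ 1 := by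
    filter_upwards [hmem] with u hu
    rw [abs_le]; constructor <;> [linarith [hu.2]; linarith [hu.1]]
  have hρint : ∀ k : ℕ, Integrable (fun u => (1 - 2 * u) ^ k) ν := by
    intro k
    refine (integrable_const (1 : ℝ)).mono'
      ((by fun_prop : Measurable fun u : ℝ => (1 - 2 * u) ^ k).aestronglyMeasurable) ?_
    filter_upwards [habs] with u h
    rw [Real.norm_eq_abs, abs_pow]
    exact pow_le_one₀ (abs_nonneg _) h
  have hρbd : ∀ k, |ρ k| ≤ 1 := by
    intro k
    rw [hρ k]
    calc |∫ u, (1 - 2 * u) ^ k ∂ν| ≤ ∫ u, |(1 - 2 * u) ^ k| ∂ν := by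
          simpa [Real.norm_eq_abs] using
            norm_integral_le_integral_norm (μ := ν) (f := fun u => (1 - 2 * u) ^ k)
      _ ≤ ∫ _u, (1 : ℝ) ∂ν := by
          refine integral_mono_ae (hρint k).abs (integrable_const 1) ?_
          filter_upwards [habs] with u h
          rw [abs_pow]
          exact pow_le_one₀ (abs_nonneg _) h
      _ = 1 := by simp
  have hαρ : ∀ k, |α * ρ k| < 1 := by
    intro k
    rw [abs_mul, abs_of_pos hα0]
    nlinarith [hρbd k, abs_nonneg (ρ k)]
  have hαρ' : ∀ k, (0 : ℝ) < 1 - α * ρ k := by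
    intro k
    have := hαρ k
    rw [abs_lt] at this
    linarith [this.2]
  have h1α : (0 : ℝ) < 1 - α := by linarith
  -- moments of ξ
  have hmoment : ∀ j k, ∫ ω, ξ j ω ^ k ∂μ = ρ k := by
    intro j k
    rw [hρ k]
    calc ∫ ω, ξ j ω ^ k ∂μ = ∫ v, v ^ k ∂(Measure.map (ξ j) μ) :=
          (integral_map (hξmeas j).aemeasurable
            (measurable_id.pow_const k).aestronglyMeasurable).symm
      _ = ∫ v, v ^ k ∂(Measure.map (fun u : ℝ => 1 - 2 * u) ν) := by rw [hξlaw j]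
      _ = ∫ u, (1 - 2 * u) ^ k ∂ν :=
          integral_map (by fun_prop) (measurable_id.pow_const k).aestronglyMeasurable
  -- moments of Y
  have hEY : ∀ k : ℕ, ∫ ω, Y ω ^ k ∂μ = (1 - α) * (1 - α * ρ k)⁻¹ := by
    intro k
    have hmeasSets : ∀ t : ℕ, MeasurableSet {ω | T ω = t} :=
      fun t => hTmeas (measurableSet_singleton t)
    have hcover : (⋃ t : ℕ, {ω | T ω = t}) = Set.univ := by
      ext ω; simp
    have hdisj : Pairwise (Function.onFun Disjoint fun t => {ω | T ω = t}) := by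
      intro a b hab
      exact Set.disjoint_left.mpr fun ω h1 h2 => hab (h1.symm.trans h2)
    have hterm : ∀ t, ∫ ω in {ω | T ω = t}, Y ω ^ k ∂μ = (1 - α) * α ^ t * ρ k ^ t := by
      intro t
      have hEq : Set.EqOn (fun ω => Y ω ^ k)
          (fun ω => (∏ j ∈ Finset.range t, ξ j ω) ^ k) {ω | T ω = t} := by
        intro ω hω
        simp only
        rw [hY ω, hω]
      rw [setIntegral_congr_fun (hmeasSets t) hEq, ← integral_indicator (hmeasSets t)]
      have hie : Set.indicator {ω | T ω = t} (fun ω => (∏ j ∈ Finset.range t, ξ j ω) ^ k)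
          = fun ω => (((fun n : ℕ => if n = t then (1 : ℝ) else 0) ∘ T) ω) *
              (((fun v : ℕ → ℝ => (∏ j ∈ Finset.range t, v j) ^ k) ∘ (fun ω' j => ξ j ω')) ω) := by
        funext ω
        by_cases h : T ω = t <;> simp [Set.indicator, h]
      rw [hie]
      have hind2 : IndepFun ((fun n : ℕ => if n = t then (1 : ℝ) else 0) ∘ T)
          ((fun v : ℕ → ℝ => (∏ j ∈ Finset.range t, v j) ^ k) ∘ (fun ω' j => ξ j ω')) μ :=
        hTindep.comp (measurable_from_top)
          ((Finset.measurable_prod (Finset.range t)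
            (fun j _ => measurable_pi_apply j)).pow_const k)
      have hasm1 : AEStronglyMeasurable ((fun n : ℕ => if n = t then (1 : ℝ) else 0) ∘ T) μ := by
        apply Measurable.aestronglyMeasurable
        exact measurable_from_top.comp hTmeas
      have hasm2 : AEStronglyMeasurable
          ((fun v : ℕ → ℝ => (∏ j ∈ Finset.range t, v j) ^ k) ∘ (fun ω' j => ξ j ω')) μ := by
        apply Measurable.aestronglyMeasurable
        exact ((Finset.measurable_prod (Finset.range t) fun j _ => hξmeas j).pow_const k)
      refine (hind2.integral_fun_mul_eq_mul_integral hasm1 hasm2).trans ?_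
      have hfac1 : integral μ ((fun n : ℕ => if n = t then (1 : ℝ) else 0) ∘ T)
          = (1 - α) * α ^ t := by
        show ∫ ω, (if T ω = t then (1 : ℝ) else 0) ∂μ = (1 - α) * α ^ t
        have he : (fun ω => if T ω = t then (1 : ℝ) else 0)
            = Set.indicator {ω | T ω = t} (fun _ => (1 : ℝ)) := by
          funext ω; simp [Set.indicator]
        rw [he, integral_indicator_const _ (hmeasSets t), measureReal_def, hTgeom t, smul_eq_mul, mul_one,
          ENNReal.toReal_ofReal (by positivity)]
      have hfac2 : integral μ
          ((fun v : ℕ → ℝ => (∏ j ∈ Finset.range t, v j) ^ k) ∘ (fun ω' j => ξ j ω'))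
          = ρ k ^ t := by
        show ∫ ω, (∏ j ∈ Finset.range t, ξ j ω) ^ k ∂μ = ρ k ^ t
        have he : ∀ ω, (∏ j ∈ Finset.range t, ξ j ω) ^ k = ∏ j ∈ Finset.range t, ξ j ω ^ k :=
          fun ω => by rw [← Finset.prod_pow]
        simp_rw [he]
        rw [integral_prod_range μ (fun j ω => ξ j ω ^ k) (fun j => (hξmeas j).pow_const k)
          (hξindep.comp (fun _ v => v ^ k) fun _ => measurable_id.pow_const k) t]
        simp_rw [hmoment]
        rw [Finset.prod_const, Finset.card_range]
      rw [hfac1, hfac2]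
    calc ∫ ω, Y ω ^ k ∂μ
        = ∫ ω in ⋃ t : ℕ, {ω | T ω = t}, Y ω ^ k ∂μ := by rw [hcover, setIntegral_univ]
      _ = ∑' t : ℕ, ∫ ω in {ω | T ω = t}, Y ω ^ k ∂μ := by
          refine integral_iUnion hmeasSets hdisj ?_
          rw [hcover]
          exact (hYk_int k).integrableOn
      _ = ∑' t : ℕ, (1 - α) * (α * ρ k) ^ t := by
          refine tsum_congr fun t => ?_
          rw [hterm t, mul_pow]; ring
      _ = (1 - α) * ∑' t : ℕ, (α * ρ k) ^ t := tsum_mul_left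
      _ = (1 - α) * (1 - α * ρ k)⁻¹ := by
          rw [tsum_geometric_of_norm_lt_one (by rw [Real.norm_eq_abs]; exact hαρ k)]
  -- pointwise expansion of the integrand
  have hpt : ∀ ω, ((1 - Y ω) / 2) ^ w * ((1 + Y ω) / 2) ^ (N - w)
      = ∑ k ∈ Finset.range (N + 1),
          (2 : ℝ) ^ (-(N : ℤ)) * ((N.choose k : ℝ) * Q k w * Y ω ^ k) := by
    intro ω
    rw [← Finset.mul_sum, hQ w hw (Y ω), div_pow, div_pow, div_mul_div_comm, ← pow_add,
      Nat.add_sub_cancel' hw, zpow_neg, zpow_natCast, inv_mul_eq_div]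
  -- value of Q 0
  have hQ0 : Q 0 w = 1 := by
    have h := hQ w hw 0
    rw [Finset.sum_eq_single 0 (fun k _ hk => by
      rw [zero_pow hk, mul_zero]) (fun h0 => absurd (Finset.mem_range.mpr (Nat.succ_pos N)) h0)] at h
    simpa using h
  -- coefficients
  have hcoef : ∀ k, (1 + (α / (1 - α)) * (1 - ρ k))⁻¹ = (1 - α) * (1 - α * ρ k)⁻¹ := by
    intro k
    have he : 1 + (α / (1 - α)) * (1 - ρ k) = (1 - α * ρ k) / (1 - α) := by
      field_simp
      ring
    rw [he, inv_div, div_eq_mul_inv]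
  have hρ0 : ρ 0 = 1 := by
    rw [hρ 0]
    simp
  -- compute the integral
  rw [integral_congr_ae (Filter.Eventually.of_forall hpt),
    integral_finset_sum _ (fun k _ => ((hYk_int k).const_mul _).const_mul _)]
  simp_rw [integral_const_mul, hEY]
  -- reorganize the sum
  rw [Finset.sum_range_succ']
  have hf0 : (2 : ℝ) ^ (-(N : ℤ)) * ((N.choose 0 : ℝ) * Q 0 w * ((1 - α) * (1 - α * ρ 0)⁻¹))
      = (2 : ℝ) ^ (-(N : ℤ)) := by
    rw [hρ0, hQ0, mul_one α, mul_inv_cancel₀ (by linarith : (1 : ℝ) - α ≠ 0)]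
    norm_num
  have hL : ∑ k ∈ Finset.Icc 1 N,
      (1 + (α / (1 - α)) * (1 - ρ k))⁻¹ * (N.choose k : ℝ) * Q k w
      = ∑ i ∈ Finset.range N,
        (N.choose (i + 1) : ℝ) * Q (i + 1) w * ((1 - α) * (1 - α * ρ (i + 1))⁻¹) := by
    rw [← Finset.Ico_add_one_right_eq_Icc, Finset.sum_Ico_eq_sum_range]
    refine Finset.sum_congr rfl fun i _ => ?_
    rw [add_comm 1 i, hcoef (i + 1)]
    ring
  rw [hL, hf0, mul_add, mul_one, ← Finset.mul_sum, Finset.mul_sum]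
  ring
end

section
/- Let (ξ_j)_{j≥1} be i.i.d. with law μ on [-1,1] having no atom at 0, ξ_0 with law μ_0, and T geometric with P(T=t)=(1-α)α^t independent of all ξ's. Then the probability that ∏_{j=0}^{T} ξ_j > 0 equals (1/2)(1 + (1 + (2α/(1-α)) μ([-1,0]))^{-1} (1 − 2μ_0([-1,0]))). -/
open Finset MeasureTheory ProbabilityTheory

lemma sign_measure_aux (ν : Measure ℝ) [IsProbabilityMeasure ν]
    (hν : ν (Set.Icc (-1:ℝ) 1)ᶜ = 0) (hν0 : ν {(0:ℝ)} = 0) :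
    (ν (Set.Iio 0)).toReal = (ν (Set.Icc (-1:ℝ) 0)).toReal ∧
    (ν (Set.Ioi 0)).toReal = 1 - (ν (Set.Icc (-1:ℝ) 0)).toReal := by
  have h1 : ν (Set.Iio (-1:ℝ)) = 0 := by
    refine measure_mono_null (fun x hx => ?_) hν
    simp only [Set.mem_Iio] at hx
    simp only [Set.mem_compl_iff, Set.mem_Icc, not_and_or, not_le]
    left; linarith
  have hIio : ν (Set.Iio 0) = ν (Set.Icc (-1:ℝ) 0) := by
    apply le_antisymm
    · calc ν (Set.Iio 0) ≤ ν (Set.Iio (-1) ∪ Set.Icc (-1:ℝ) 0) := by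
            refine measure_mono (fun x hx => ?_)
            simp only [Set.mem_Iio] at hx
            rcases lt_or_ge x (-1) with h | h
            · exact Or.inl h
            · exact Or.inr ⟨h, hx.le⟩
        _ ≤ ν (Set.Iio (-1)) + ν (Set.Icc (-1:ℝ) 0) := measure_union_le _ _
        _ = ν (Set.Icc (-1:ℝ) 0) := by rw [h1, zero_add]
    · calc ν (Set.Icc (-1:ℝ) 0) ≤ ν (Set.Iio 0 ∪ {0}) := by
            refine measure_mono (fun x hx => ?_)
            rcases lt_or_eq_of_le hx.2 with h | h
            · exact Or.inl h
            · exact Or.inr h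
        _ ≤ ν (Set.Iio 0) + ν {0} := measure_union_le _ _
        _ = ν (Set.Iio 0) := by rw [hν0, add_zero]
  have hIic : ν (Set.Iic 0) = ν (Set.Icc (-1:ℝ) 0) := by
    rw [← hIio]
    apply le_antisymm
    · calc ν (Set.Iic 0) ≤ ν (Set.Iio 0 ∪ {0}) := by
            refine measure_mono (fun x hx => ?_)
            rcases lt_or_eq_of_le (Set.mem_Iic.mp hx) with h | h
            · exact Or.inl h
            · exact Or.inr h
        _ ≤ ν (Set.Iio 0) + ν {0} := measure_union_le _ _
        _ = ν (Set.Iio 0) := by rw [hν0, add_zero]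
    · exact measure_mono Set.Iio_subset_Iic_self
  refine ⟨by rw [hIio], ?_⟩
  have hc : ν (Set.Ioi (0:ℝ)) = 1 - ν (Set.Iic 0) := by
    rw [← Set.compl_Iic, measure_compl measurableSet_Iic (measure_ne_top ν _),
      measure_univ]
  rw [hc, ENNReal.toReal_sub_of_le prob_le_one (by simp), hIic, ENNReal.toReal_one]

/-- with `(ξ_j)_{j≥1}` i.i.d. with law `m` on `[-1,1]` (no atom at 0),
`ξ_0` with law `m₀` (no atom at 0), all independent, and `T` geometric
(`P(T=t)=(1-α)α^t`) independent of the `ξ`'s, the probability that `∏_{j=0}^T ξ_j > 0`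
equals `(1/2)(1 + (1 + (2α/(1-α)) m([-1,0]))⁻¹ (1 - 2 m₀([-1,0])))`. -/
theorem geometric_product_sign_probability
    (α : ℝ) (hα : α ∈ Set.Ioo (0 : ℝ) 1)
    {Ω : Type*} [MeasurableSpace Ω] (μ : Measure Ω) [IsProbabilityMeasure μ]
    (m m₀ : Measure ℝ) [IsProbabilityMeasure m] [IsProbabilityMeasure m₀]
    (hm : m (Set.Icc (-1 : ℝ) 1)ᶜ = 0) (hm₀ : m₀ (Set.Icc (-1 : ℝ) 1)ᶜ = 0)
    (hm0 : m {(0 : ℝ)} = 0) (hm₀0 : m₀ {(0 : ℝ)} = 0)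
    (ξ : ℕ → Ω → ℝ) (T : Ω → ℕ)
    (hξmeas : ∀ j, Measurable (ξ j))
    (hξ0law : Measure.map (ξ 0) μ = m₀)
    (hξlaw : ∀ j : ℕ, 1 ≤ j → Measure.map (ξ j) μ = m)
    (hξindep : iIndepFun ξ μ)
    (hTmeas : Measurable T)
    (hTgeom : ∀ t : ℕ, μ {ω | T ω = t} = ENNReal.ofReal ((1 - α) * α ^ t))
    (hTindep : IndepFun T (fun ω => fun j => ξ j ω) μ) :
    (μ {ω | 0 < ∏ j ∈ Finset.range (T ω + 1), ξ j ω}).toReal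
      = (1 / 2) * (1 +
          (1 + (2 * α / (1 - α)) * (m (Set.Icc (-1 : ℝ) 0)).toReal)⁻¹ *
            (1 - 2 * (m₀ (Set.Icc (-1 : ℝ) 0)).toReal)) := by
  obtain ⟨hα0, hα1⟩ := hα
  set p : ℝ := (m (Set.Icc (-1:ℝ) 0)).toReal with hp_def
  set p₀ : ℝ := (m₀ (Set.Icc (-1:ℝ) 0)).toReal with hp0_def
  obtain ⟨hmIio, hmIoi⟩ := sign_measure_aux m hm hm0
  obtain ⟨hm₀Iio, hm₀Ioi⟩ := sign_measure_aux m₀ hm₀ hm₀0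
  have hp0 : 0 ≤ p := ENNReal.toReal_nonneg
  have hp1 : p ≤ 1 := by
    have := ENNReal.toReal_mono ENNReal.one_ne_top (prob_le_one (μ := m) (s := Set.Icc (-1:ℝ) 0))
    simpa using this
  -- laws of preimages
  have hlawset : ∀ j, 1 ≤ j → ∀ s : Set ℝ, MeasurableSet s → μ (ξ j ⁻¹' s) = m s := by
    intro j hj s hs
    rw [← hξlaw j hj, Measure.map_apply (hξmeas j) hs]
  have hlaw0 : ∀ s : Set ℝ, MeasurableSet s → μ (ξ 0 ⁻¹' s) = m₀ s := by
    intro s hs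
    rw [← hξ0law, Measure.map_apply (hξmeas 0) hs]
  have hFmeas : ∀ n : ℕ, Measurable (fun ω => ∏ j ∈ Finset.range n, ξ j ω) :=
    fun n => Finset.measurable_prod _ (fun j _ => hξmeas j)
  -- key induction on sign probabilities
  have key : ∀ t : ℕ,
      (μ {ω | 0 < ∏ j ∈ Finset.range (t+1), ξ j ω}).toReal
        = (1 + (1-2*p₀)*(1-2*p)^t)/2 ∧
      (μ {ω | ∏ j ∈ Finset.range (t+1), ξ j ω < 0}).toReal
        = (1 - (1-2*p₀)*(1-2*p)^t)/2 := by
    intro t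
    induction t with
    | zero =>
      have e1 : {ω | 0 < ∏ j ∈ Finset.range 1, ξ j ω} = ξ 0 ⁻¹' Set.Ioi 0 := by
        ext ω; simp [Finset.prod_range_one]
      have e2 : {ω | ∏ j ∈ Finset.range 1, ξ j ω < 0} = ξ 0 ⁻¹' Set.Iio 0 := by
        ext ω; simp [Finset.prod_range_one]
      rw [e1, e2, hlaw0 _ measurableSet_Ioi, hlaw0 _ measurableSet_Iio]
      constructor
      · rw [hm₀Ioi, pow_zero]; ring
      · rw [hm₀Iio, pow_zero]; ring
    | succ t ih =>
      set F := fun ω => ∏ j ∈ Finset.range (t+1), ξ j ω with hF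
      have hFm : Measurable F := hFmeas (t+1)
      have hInd : IndepFun F (ξ (t+1)) μ := by
        have h := hξindep.indepFun_prod_range_succ hξmeas (t+1)
        have heq : (∏ j ∈ Finset.range (t+1), ξ j) = F := by
          funext ω; simp [hF]
        rwa [heq] at h
      have hmul : ∀ ω, ∏ j ∈ Finset.range (t+1+1), ξ j ω = F ω * ξ (t+1) ω := by
        intro ω; rw [Finset.prod_range_succ]
      have hppr : (μ (F ⁻¹' Set.Ioi 0)).toReal = (1 + (1-2*p₀)*(1-2*p)^t)/2 := by
        have : F ⁻¹' Set.Ioi 0 = {ω | 0 < ∏ j ∈ Finset.range (t+1), ξ j ω} := by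
          ext ω; simp [hF]
        rw [this]; exact ih.1
      have hnpr : (μ (F ⁻¹' Set.Iio 0)).toReal = (1 - (1-2*p₀)*(1-2*p)^t)/2 := by
        have : F ⁻¹' Set.Iio 0 = {ω | ∏ j ∈ Finset.range (t+1), ξ j ω < 0} := by
          ext ω; simp [hF]
        rw [this]; exact ih.2
      have hxpos : (μ (ξ (t+1) ⁻¹' Set.Ioi 0)).toReal = 1 - p := by
        rw [hlawset (t+1) (Nat.succ_le_succ (Nat.zero_le t)) _ measurableSet_Ioi, hmIoi]
      have hxneg : (μ (ξ (t+1) ⁻¹' Set.Iio 0)).toReal = p := by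
        rw [hlawset (t+1) (Nat.succ_le_succ (Nat.zero_le t)) _ measurableSet_Iio, hmIio]
      constructor
      · have epos : {ω | 0 < ∏ j ∈ Finset.range (t+1+1), ξ j ω}
            = (F ⁻¹' Set.Ioi 0 ∩ ξ (t+1) ⁻¹' Set.Ioi 0)
              ∪ (F ⁻¹' Set.Iio 0 ∩ ξ (t+1) ⁻¹' Set.Iio 0) := by
          ext ω
          simp only [Set.mem_setOf_eq, hmul ω, Set.mem_union, Set.mem_inter_iff,
            Set.mem_preimage, Set.mem_Ioi, Set.mem_Iio]
          exact mul_pos_iff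
        have hdisj : Disjoint (F ⁻¹' Set.Ioi 0 ∩ ξ (t+1) ⁻¹' Set.Ioi 0)
            (F ⁻¹' Set.Iio 0 ∩ ξ (t+1) ⁻¹' Set.Iio 0) := by
          refine Set.disjoint_left.mpr ?_
          rintro ω ⟨h1, -⟩ ⟨h2, -⟩
          simp only [Set.mem_preimage, Set.mem_Ioi, Set.mem_Iio] at h1 h2
          linarith
        rw [epos, measure_union hdisj
          ((hFm measurableSet_Iio).inter ((hξmeas (t+1)) measurableSet_Iio)),
          hInd.measure_inter_preimage_eq_mul _ _ measurableSet_Ioi measurableSet_Ioi,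
          hInd.measure_inter_preimage_eq_mul _ _ measurableSet_Iio measurableSet_Iio,
          ENNReal.toReal_add (ENNReal.mul_ne_top (measure_ne_top μ _) (measure_ne_top μ _))
            (ENNReal.mul_ne_top (measure_ne_top μ _) (measure_ne_top μ _)),
          ENNReal.toReal_mul, ENNReal.toReal_mul, hppr, hnpr, hxpos, hxneg, pow_succ]
        ring
      · have eneg : {ω | ∏ j ∈ Finset.range (t+1+1), ξ j ω < 0}
            = (F ⁻¹' Set.Ioi 0 ∩ ξ (t+1) ⁻¹' Set.Iio 0)
              ∪ (F ⁻¹' Set.Iio 0 ∩ ξ (t+1) ⁻¹' Set.Ioi 0) := by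
          ext ω
          simp only [Set.mem_setOf_eq, hmul ω, Set.mem_union, Set.mem_inter_iff,
            Set.mem_preimage, Set.mem_Ioi, Set.mem_Iio]
          exact mul_neg_iff
        have hdisj : Disjoint (F ⁻¹' Set.Ioi 0 ∩ ξ (t+1) ⁻¹' Set.Iio 0)
            (F ⁻¹' Set.Iio 0 ∩ ξ (t+1) ⁻¹' Set.Ioi 0) := by
          refine Set.disjoint_left.mpr ?_
          rintro ω ⟨h1, -⟩ ⟨h2, -⟩
          simp only [Set.mem_preimage, Set.mem_Ioi, Set.mem_Iio] at h1 h2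
          linarith
        rw [eneg, measure_union hdisj
          ((hFm measurableSet_Iio).inter ((hξmeas (t+1)) measurableSet_Ioi)),
          hInd.measure_inter_preimage_eq_mul _ _ measurableSet_Ioi measurableSet_Iio,
          hInd.measure_inter_preimage_eq_mul _ _ measurableSet_Iio measurableSet_Ioi,
          ENNReal.toReal_add (ENNReal.mul_ne_top (measure_ne_top μ _) (measure_ne_top μ _))
            (ENNReal.mul_ne_top (measure_ne_top μ _) (measure_ne_top μ _)),
          ENNReal.toReal_mul, ENNReal.toReal_mul, hppr, hnpr, hxpos, hxneg, pow_succ]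
        ring
  -- decomposition over values of T
  have hTm : ∀ t : ℕ, MeasurableSet {ω | T ω = t} := by
    intro t
    have h := hTmeas (measurableSet_singleton t)
    have : T ⁻¹' ({t} : Set ℕ) = {ω | T ω = t} := by ext ω; simp
    rwa [this] at h
  have hBm : ∀ t : ℕ, MeasurableSet {ω | 0 < ∏ j ∈ Finset.range (t+1), ξ j ω} := by
    intro t
    have h := (hFmeas (t+1)) (measurableSet_Ioi (a := (0:ℝ)))
    have : (fun ω => ∏ j ∈ Finset.range (t+1), ξ j ω) ⁻¹' Set.Ioi 0
        = {ω | 0 < ∏ j ∈ Finset.range (t+1), ξ j ω} := by ext ω; simp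
    rwa [this] at h
  have hdecomp : {ω | 0 < ∏ j ∈ Finset.range (T ω + 1), ξ j ω}
      = ⋃ t, ({ω | T ω = t} ∩ {ω | 0 < ∏ j ∈ Finset.range (t+1), ξ j ω}) := by
    ext ω
    simp only [Set.mem_setOf_eq, Set.mem_iUnion, Set.mem_inter_iff]
    constructor
    · intro h; exact ⟨T ω, rfl, h⟩
    · rintro ⟨t, ht, h⟩; subst ht; exact h
  have hPdisj : Pairwise (Function.onFun Disjoint
      (fun t => {ω | T ω = t} ∩ {ω | 0 < ∏ j ∈ Finset.range (t+1), ξ j ω})) := by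
    intro s t hst
    refine Set.disjoint_left.mpr ?_
    rintro ω ⟨h1, -⟩ ⟨h2, -⟩
    exact hst (h1.symm.trans h2)
  have hindT : ∀ t : ℕ, μ ({ω | T ω = t} ∩ {ω | 0 < ∏ j ∈ Finset.range (t+1), ξ j ω})
      = μ {ω | T ω = t} * μ {ω | 0 < ∏ j ∈ Finset.range (t+1), ξ j ω} := by
    intro t
    have hg : Measurable (fun x : ℕ → ℝ => ∏ j ∈ Finset.range (t+1), x j) :=
      Finset.measurable_prod _ (fun j _ => measurable_pi_apply j)
    have h : IndepFun T (fun ω => ∏ j ∈ Finset.range (t+1), ξ j ω) μ :=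
      hTindep.comp measurable_id hg
    have hh := h.measure_inter_preimage_eq_mul ({t} : Set ℕ) (Set.Ioi 0)
      (measurableSet_singleton t) measurableSet_Ioi
    have e1 : T ⁻¹' ({t} : Set ℕ) = {ω | T ω = t} := by ext ω; simp
    have e2 : (fun ω => ∏ j ∈ Finset.range (t+1), ξ j ω) ⁻¹' Set.Ioi 0
        = {ω | 0 < ∏ j ∈ Finset.range (t+1), ξ j ω} := by ext ω; simp
    rwa [e1, e2] at hh
  rw [hdecomp, measure_iUnion hPdisj (fun t => (hTm t).inter (hBm t)),
    ENNReal.tsum_toReal_eq (fun t => measure_ne_top μ _)]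
  have hterm : ∀ t : ℕ, (μ ({ω | T ω = t} ∩ {ω | 0 < ∏ j ∈ Finset.range (t+1), ξ j ω})).toReal
      = ((1-α)/2) * α^t + ((1-α)*(1-2*p₀)/2) * (α*(1-2*p))^t := by
    intro t
    rw [hindT t, ENNReal.toReal_mul, hTgeom t,
      ENNReal.toReal_ofReal (mul_nonneg (by linarith) (pow_nonneg hα0.le t)), (key t).1,
      mul_pow]
    ring
  rw [tsum_congr hterm]
  have habs : |α*(1-2*p)| < 1 := by
    rw [abs_mul, abs_of_pos hα0]
    have h1 : |1-2*p| ≤ 1 := abs_le.mpr ⟨by linarith, by linarith⟩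
    calc α * |1-2*p| ≤ α * 1 := mul_le_mul_of_nonneg_left h1 hα0.le
      _ < 1 := by linarith
  have s1 : Summable (fun t : ℕ => ((1-α)/2) * α^t) :=
    (summable_geometric_of_lt_one hα0.le hα1).mul_left _
  have s2 : Summable (fun t : ℕ => ((1-α)*(1-2*p₀)/2) * (α*(1-2*p))^t) :=
    (summable_geometric_of_abs_lt_one habs).mul_left _
  rw [Summable.tsum_add s1 s2, tsum_mul_left, tsum_mul_left,
    tsum_geometric_of_lt_one hα0.le hα1, tsum_geometric_of_abs_lt_one habs]
  have h1α : (1:ℝ) - α ≠ 0 := by linarith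
  have hden : (0:ℝ) < 1 - α*(1-2*p) := by nlinarith
  have hden2 : (0:ℝ) < 1 + (2*α/(1-α))*p := by
    have : 0 ≤ (2*α/(1-α))*p := mul_nonneg (div_nonneg (by linarith) (by linarith)) hp0
    linarith
  have hrw : (1 + (2*α/(1-α))*p)⁻¹ = (1-α)/(1-α*(1-2*p)) := by
    have h : 1 + (2*α/(1-α))*p = (1 - α*(1-2*p))/(1-α) := by
      field_simp; ring
    rw [h, inv_div]
  rw [hrw]
  field_simp
end
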